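/- For every q ≥ 1 and every monomial m of total (s,t)-degree q·d·e in k[s,t], m ∈ R; that is, the degree-(qe) component of R has full dimension d·q·e + 1. -/

import Mathlib

open MvPolynomial

/-- Generators of the coordinate ring `R` of the weighted rational curve of type `(d,e)`. -/
noncomputable def wrcGens9 (k : Type*) [Field k] (d e : ℕ) : Set (MvPolynomial (Fin 2) k) :=
  ((fun i => X 0 ^ (d - i) * X 1 ^ i) '' Set.Iic (d - 1)) ∪
  ((fun j => X 0 ^ (e - 1 - j) * X 1 ^ (d * e - (e - 1) + j)) '' Set.Iic (e - 1))

section Aux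

variable {k : Type*} [Field k] {d e : ℕ}

lemma memG1 {i : ℕ} (hi : i ≤ d - 1) :
    (X 0 : MvPolynomial (Fin 2) k) ^ (d - i) * X 1 ^ i ∈ Algebra.adjoin k (wrcGens9 k d e) :=
  Algebra.subset_adjoin (Or.inl ⟨i, hi, rfl⟩)

lemma memG2 {j : ℕ} (hj : j ≤ e - 1) :
    (X 0 : MvPolynomial (Fin 2) k) ^ (e - 1 - j) * X 1 ^ (d * e - (e - 1) + j) ∈
      Algebra.adjoin k (wrcGens9 k d e) :=
  Algebra.subset_adjoin (Or.inr ⟨j, hj, rfl⟩)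

lemma lemB (hd : 1 ≤ d) : ∀ n u v : ℕ, v ≤ (d - 1) * n → u + v = d * n →
    (X 0 : MvPolynomial (Fin 2) k) ^ u * X 1 ^ v ∈ Algebra.adjoin k (wrcGens9 k d e) := by
  obtain ⟨c, rfl⟩ : ∃ c, d = c + 1 := ⟨d - 1, by omega⟩
  intro n
  induction n with
  | zero =>
    intro u v hv huv
    have hu : u = 0 := by omega
    have hv0 : v = 0 := by omega
    subst hu hv0
    simpa using Subalgebra.one_mem _
  | succ n ih =>
    intro u v hv huv
    have hcn : (c + 1 - 1) * (n + 1) = c * n + c := by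
      simp only [Nat.add_sub_cancel]; ring
    have hdn : (c + 1) * (n + 1) = c * n + c + n + 1 := by ring
    have hdn' : (c + 1) * n = c * n + n := by ring
    set i := min v c with hi_def
    have hi : i ≤ (c + 1) - 1 := by omega
    have hvi : v - i ≤ (c + 1 - 1) * n := by
      rw [show (c + 1 - 1) * n = c * n by simp only [Nat.add_sub_cancel]]
      omega
    have hu : (c + 1) - i ≤ u := by omega
    have heq : (X 0 : MvPolynomial (Fin 2) k) ^ u * X 1 ^ v =
        (X 0 ^ ((c + 1) - i) * X 1 ^ i) * (X 0 ^ (u - ((c + 1) - i)) * X 1 ^ (v - i)) := by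
      have h1 : ((c + 1) - i) + (u - ((c + 1) - i)) = u := by omega
      have h2 : i + (v - i) = v := by omega
      rw [mul_mul_mul_comm, ← pow_add, ← pow_add, h1, h2]
    rw [heq]
    exact mul_mem (memG1 hi) (ih (u - ((c + 1) - i)) (v - i) hvi (by omega))

lemma lemA (hd : 1 ≤ d) (he : 1 ≤ e) :
    ∀ u v : ℕ, u + v = d * e →
    (X 0 : MvPolynomial (Fin 2) k) ^ u * X 1 ^ v ∈ Algebra.adjoin k (wrcGens9 k d e) := by
  intro u v huv
  have hde : (d - 1) * e + e = d * e := by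
    obtain ⟨c, rfl⟩ : ∃ c, d = c + 1 := ⟨d - 1, by omega⟩
    simp only [Nat.add_sub_cancel]; ring
  rcases le_or_gt v ((d - 1) * e) with h | h
  · exact lemB hd e u v h huv
  · have hu : u ≤ e - 1 := by omega
    have hj : e - 1 - u ≤ e - 1 := by omega
    have h1 : e - 1 - (e - 1 - u) = u := by omega
    have h2 : d * e - (e - 1) + (e - 1 - u) = v := by omega
    have := memG2 (k := k) (d := d) hj
    rwa [h1, h2] at this

lemma lemC (hd : 1 ≤ d) (he : 1 ≤ e) {q : ℕ} (hq : 1 ≤ q) :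
    ∀ u v : ℕ, u + v = q * d * e →
    (X 0 : MvPolynomial (Fin 2) k) ^ u * X 1 ^ v ∈ Algebra.adjoin k (wrcGens9 k d e) := by
  induction q, hq using Nat.le_induction with
  | base =>
    intro u v huv
    simp only [one_mul] at huv
    exact lemA hd he u v huv
  | succ q hq ih =>
    intro u v huv
    have hsplit : (q + 1) * d * e = d * e + q * d * e := by ring
    set u1 := min u (d * e) with hu1
    set u2 := u - u1 with hu2
    have h1 : u1 + (d * e - u1) = d * e := by omega
    have h2 : u2 + (q * d * e - u2) = q * d * e := by omega
    have heq : (X 0 : MvPolynomial (Fin 2) k) ^ u * X 1 ^ v =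
        (X 0 ^ u1 * X 1 ^ (d * e - u1)) * (X 0 ^ u2 * X 1 ^ (q * d * e - u2)) := by
      have e1 : u1 + u2 = u := by omega
      have e2 : (d * e - u1) + (q * d * e - u2) = v := by omega
      rw [mul_mul_mul_comm, ← pow_add, ← pow_add, e1, e2]
    rw [heq]
    exact mul_mem (lemA hd he u1 _ h1) (ih u2 _ h2)

/-- The index family for the monomial basis of the degree-`N` homogeneous component. -/
noncomputable def homFam (k : Type*) [Field k] (N : ℕ) :
    Fin (N + 1) → MvPolynomial (Fin 2) k :=
  fun u => monomial (Finsupp.single 0 (u : ℕ) + Finsupp.single 1 (N - (u : ℕ))) 1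

lemma homFam_eq (N : ℕ) (u : Fin (N + 1)) :
    homFam k N u = (X 0 : MvPolynomial (Fin 2) k) ^ (u : ℕ) * X 1 ^ (N - (u : ℕ)) := by
  rw [homFam, X_pow_eq_monomial, X_pow_eq_monomial, monomial_mul, one_mul]

lemma degree_fin2 (f : Fin 2 →₀ ℕ) : f.degree = f 0 + f 1 := by
  rw [Finsupp.degree_apply, Finset.sum_subset (Finset.subset_univ f.support)]
  · exact Fin.sum_univ_two _
  · intro x _ hx
    simpa using Finsupp.notMem_support_iff.mp hx

lemma homog_eq_span (N : ℕ) :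
    homogeneousSubmodule (Fin 2) k N = Submodule.span k (Set.range (homFam k N)) := by
  apply le_antisymm
  · intro p hp
    rw [mem_homogeneousSubmodule] at hp
    rw [← p.support_sum_monomial_coeff]
    apply Submodule.sum_mem
    intro D hD
    have hdeg : (Finsupp.weight 1) D = N := hp (mem_support_iff.mp hD)
    change Finsupp.weight (fun _ => 1) D = N at hdeg
    rw [← Finsupp.degree_eq_weight_one, degree_fin2] at hdeg
    have hsum : D 0 + D 1 = N := hdeg
    have hrep : D = Finsupp.single 0 (D 0) + Finsupp.single 1 (N - D 0) := by
      ext i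
      fin_cases i <;> simp <;> omega
    have hmem : (monomial D 1 : MvPolynomial (Fin 2) k) ∈
        Submodule.span k (Set.range (homFam k N)) := by
      apply Submodule.subset_span
      refine ⟨⟨D 0, by omega⟩, ?_⟩
      show monomial (Finsupp.single 0 (D 0) + Finsupp.single 1 (N - D 0)) 1 = _
      rw [← hrep]
    have : (monomial D (coeff D p) : MvPolynomial (Fin 2) k) =
        coeff D p • monomial D 1 := by
      rw [smul_monomial, smul_eq_mul, mul_one]
    rw [this]
    exact Submodule.smul_mem _ _ hmem
  · rw [Submodule.span_le]
    rintro _ ⟨u, rfl⟩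
    rw [SetLike.mem_coe, mem_homogeneousSubmodule, homFam]
    apply isHomogeneous_monomial
    rw [degree_fin2]
    simp [Finsupp.single_apply]
    omega

lemma homFam_linearIndependent (N : ℕ) :
    LinearIndependent k (homFam k N) := by
  have hb := (basisMonomials (Fin 2) k).linearIndependent
  have : homFam k N = (basisMonomials (Fin 2) k) ∘
      (fun u : Fin (N + 1) =>
        Finsupp.single 0 (u : ℕ) + Finsupp.single 1 (N - (u : ℕ))) := by
    funext u
    simp [homFam, coe_basisMonomials]
  rw [this]
  apply hb.comp
  intro a b hab
  have := congrArg (fun f => f 0) hab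
  simp at this
  exact Fin.ext this

lemma finrank_homog (N : ℕ) :
    Module.finrank k ↥(homogeneousSubmodule (Fin 2) k N) = N + 1 := by
  rw [homog_eq_span]
  rw [finrank_span_eq_card (homFam_linearIndependent (k := k) N)]
  simp

end Aux

/-- For `q ≥ 1`, every monomial of total `(s,t)`-degree `q·d·e` lies in `R`, and the
degree-`qe` component of `R` has full dimension `d·q·e + 1`. -/
theorem stmt9 (k : Type*) [Field k] (d e : ℕ) (hd : 1 ≤ d) (he : 1 ≤ e)
    (R : Subalgebra k (MvPolynomial (Fin 2) k))
    (hR : R = Algebra.adjoin k (wrcGens9 k d e))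
    (q : ℕ) (hq : 1 ≤ q) :
    (∀ u v : ℕ, u + v = q * d * e → (X 0 : MvPolynomial (Fin 2) k) ^ u * X 1 ^ v ∈ R) ∧
    Module.finrank k
      ↥(Subalgebra.toSubmodule R ⊓ homogeneousSubmodule (Fin 2) k (q * d * e)) =
      d * q * e + 1 := by
  subst hR
  refine ⟨lemC hd he hq, ?_⟩
  have hle : homogeneousSubmodule (Fin 2) k (q * d * e) ≤
      Subalgebra.toSubmodule (Algebra.adjoin k (wrcGens9 k d e)) := by
    rw [homog_eq_span, Submodule.span_le]
    rintro _ ⟨u, rfl⟩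
    rw [homFam_eq]
    exact lemC hd he hq (u : ℕ) _ (by omega)
  rw [inf_eq_right.mpr hle, finrank_homog]
  ring
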